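/- For every integer K ≥ 1, every integer p ≥ 1, and every q ∈ [1,∞], the row-column overlap norm Ω_q is a norm on K-tuples of symmetric p×p real matrices: for all symmetric Θ¹,…,Θᴷ and Φ¹,…,Φᴷ, (i) Ω_q(Θ¹,…,Θᴷ) is finite and nonnegative; (ii) Ω_q(Θ¹,…,Θᴷ) = 0 if and only if Θᵏ = 0 for all k; (iii) Ω_q(cΘ¹,…,cΘᴷ) = |c| Ω_q(Θ¹,…,Θᴷ) for all real c; (iv) Ω_q(Θ¹+Φ¹,…,Θᴷ+Φᴷ) ≤ Ω_q(Θ¹,…,Θᴷ) + Ω_q(Φ¹,…,Φᴷ). -/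

import Mathlib

open Matrix
open scoped ENNReal BigOperators Pointwise

/-- The ℓ_q norm of a finitely-indexed real vector, for q ∈ [0,∞]
(the maximum absolute entry when q = ∞). -/
noncomputable def lqNorm (q : ℝ≥0∞) {ι : Type*} [Fintype ι] (x : ι → ℝ) : ℝ :=
  ‖(WithLp.equiv q (ι → ℝ)).symm x‖

/-- The row-column overlap norm Ω_q of a K-tuple of p×p real matrices:
the infimum of Σ_j ‖([V¹;…;Vᴷ])_j‖_q over all decompositions Θᵏ = Vᵏ + (Vᵏ)ᵀ. -/
noncomputable def rcon (q : ℝ≥0∞) (K p : ℕ)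
    (Θ : Fin K → Matrix (Fin p) (Fin p) ℝ) : ℝ :=
  sInf { r : ℝ | ∃ V : Fin K → Matrix (Fin p) (Fin p) ℝ,
    (∀ k, Θ k = V k + (V k)ᵀ) ∧
    r = ∑ j : Fin p, lqNorm q (fun ki : Fin K × Fin p => V ki.1 ki.2 j) }

/-- The row-column overlap norm Ω_q of a single p×p matrix (the case K = 1). -/
noncomputable def rcon1 (q : ℝ≥0∞) {p : ℕ} (Θ : Matrix (Fin p) (Fin p) ℝ) : ℝ :=
  sInf { r : ℝ | ∃ V : Matrix (Fin p) (Fin p) ℝ,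
    Θ = V + Vᵀ ∧ r = ∑ j : Fin p, lqNorm q (fun i => V i j) }

section Aux

variable {ι : Type*} [Fintype ι]

lemma lqNorm_nonneg (q : ℝ≥0∞) (x : ι → ℝ) : 0 ≤ lqNorm q x := by
  unfold lqNorm
  rcases eq_or_ne q 0 with rfl | h0
  · rw [PiLp.norm_eq_card]
    exact Nat.cast_nonneg _
  rcases eq_or_ne q ∞ with rfl | ht
  · rw [PiLp.norm_eq_ciSup]
    exact Real.iSup_nonneg fun i => norm_nonneg _
  · rw [PiLp.norm_eq_sum (ENNReal.toReal_pos h0 ht)]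
    positivity

lemma lqNorm_zero (q : ℝ≥0∞) (hq : 1 ≤ q) : lqNorm q (0 : ι → ℝ) = 0 := by
  haveI : Fact (1 ≤ q) := ⟨hq⟩
  unfold lqNorm
  rw [WithLp.equiv_symm_apply, WithLp.toLp_zero]
  exact norm_zero

lemma lqNorm_smul (q : ℝ≥0∞) (hq : 1 ≤ q) (c : ℝ) (x : ι → ℝ) :
    lqNorm q (c • x) = |c| * lqNorm q x := by
  haveI : Fact (1 ≤ q) := ⟨hq⟩
  rw [lqNorm, WithLp.equiv_symm_apply, WithLp.toLp_smul, norm_smul, Real.norm_eq_abs, lqNorm, WithLp.equiv_symm_apply]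

lemma lqNorm_add_le (q : ℝ≥0∞) (hq : 1 ≤ q) (x y : ι → ℝ) :
    lqNorm q (x + y) ≤ lqNorm q x + lqNorm q y := by
  haveI : Fact (1 ≤ q) := ⟨hq⟩
  rw [lqNorm, WithLp.equiv_symm_apply, WithLp.toLp_add]
  exact norm_add_le _ _

lemma abs_le_lqNorm (q : ℝ≥0∞) (hq : 1 ≤ q) (x : ι → ℝ) (i : ι) :
    |x i| ≤ lqNorm q x := by
  rcases eq_or_ne q ∞ with h | h
  · subst h
    rw [lqNorm]
    have h1 : ‖(WithLp.equiv ∞ (ι → ℝ)).symm x‖ = ⨆ j, ‖x j‖ := PiLp.norm_eq_ciSup _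
    rw [h1, ← Real.norm_eq_abs]
    exact le_ciSup (f := fun j => ‖x j‖) (Set.Finite.bddAbove (Set.finite_range _)) i
  · have ht : 1 ≤ q.toReal := by
      rw [← ENNReal.toReal_one]
      exact ENNReal.toReal_mono h hq
    have ht0 : 0 < q.toReal := lt_of_lt_of_le one_pos ht
    rw [lqNorm, PiLp.norm_eq_sum ht0]
    have h1 : |x i| = (|x i| ^ q.toReal) ^ (1 / q.toReal) := by
      rw [← Real.rpow_mul (abs_nonneg _), mul_one_div, div_self (ne_of_gt ht0),
        Real.rpow_one]
    rw [h1]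
    apply Real.rpow_le_rpow (Real.rpow_nonneg (abs_nonneg _) _)
    · have : |x i| ^ q.toReal = ‖x i‖ ^ q.toReal := by rw [Real.norm_eq_abs]
      rw [this]
      exact Finset.single_le_sum (fun j _ => Real.rpow_nonneg (norm_nonneg _) _)
        (Finset.mem_univ i)
    · positivity

end Aux

section RconAux

variable {K p : ℕ} (q : ℝ≥0∞)

/-- The defining set for `rcon`. -/
def rconSet (q : ℝ≥0∞) (K p : ℕ) (Θ : Fin K → Matrix (Fin p) (Fin p) ℝ) : Set ℝ :=
  { r : ℝ | ∃ V : Fin K → Matrix (Fin p) (Fin p) ℝ,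
    (∀ k, Θ k = V k + (V k)ᵀ) ∧
    r = ∑ j : Fin p, lqNorm q (fun ki : Fin K × Fin p => V ki.1 ki.2 j) }

lemma rcon_eq (Θ : Fin K → Matrix (Fin p) (Fin p) ℝ) :
    rcon q K p Θ = sInf (rconSet q K p Θ) := rfl

lemma rconSet_nonneg (Θ : Fin K → Matrix (Fin p) (Fin p) ℝ)
    {r : ℝ} (hr : r ∈ rconSet q K p Θ) : 0 ≤ r := by
  obtain ⟨V, -, rfl⟩ := hr
  exact Finset.sum_nonneg fun j _ => lqNorm_nonneg q _

lemma rconSet_bddBelow (Θ : Fin K → Matrix (Fin p) (Fin p) ℝ) :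
    BddBelow (rconSet q K p Θ) :=
  ⟨0, fun r hr => rconSet_nonneg q Θ hr⟩

lemma rconSet_nonempty (Θ : Fin K → Matrix (Fin p) (Fin p) ℝ)
    (hΘ : ∀ k, (Θ k).IsSymm) : (rconSet q K p Θ).Nonempty := by
  refine ⟨_, fun k => (2:ℝ)⁻¹ • Θ k, fun k => ?_, rfl⟩
  have hs := hΘ k
  rw [Matrix.IsSymm] at hs
  rw [Matrix.transpose_smul, hs, ← smul_add]
  ext i j
  simp [Matrix.add_apply]
  ring

lemma rcon_nonneg (Θ : Fin K → Matrix (Fin p) (Fin p) ℝ) : 0 ≤ rcon q K p Θ := by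
  rcases Set.eq_empty_or_nonempty (rconSet q K p Θ) with h | h
  · rw [rcon_eq, h, Real.sInf_empty]
  · exact le_csInf h fun r hr => rconSet_nonneg q Θ hr

lemma rcon_le (Θ : Fin K → Matrix (Fin p) (Fin p) ℝ) {r : ℝ}
    (hr : r ∈ rconSet q K p Θ) : rcon q K p Θ ≤ r :=
  csInf_le (rconSet_bddBelow q Θ) hr

end RconAux

/-- For K ≥ 1, p ≥ 1 and q ∈ [1,∞], the RCON Ω_q is a norm on
K-tuples of symmetric p×p real matrices: nonnegativity, definiteness,
absolute homogeneity, and the triangle inequality. -/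
theorem rcon_is_norm (K p : ℕ) (hK : 1 ≤ K) (hp : 1 ≤ p)
    (q : ℝ≥0∞) (hq : 1 ≤ q)
    (Θ Φ : Fin K → Matrix (Fin p) (Fin p) ℝ)
    (hΘ : ∀ k, (Θ k).IsSymm) (hΦ : ∀ k, (Φ k).IsSymm) :
    0 ≤ rcon q K p Θ ∧
    (rcon q K p Θ = 0 ↔ ∀ k, Θ k = 0) ∧
    (∀ c : ℝ, rcon q K p (fun k => c • Θ k) = |c| * rcon q K p Θ) ∧
    rcon q K p (fun k => Θ k + Φ k) ≤ rcon q K p Θ + rcon q K p Φ := by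
  -- generic scaling fact: if r ∈ rconSet Θ then |c| * r ∈ rconSet (c • Θ)
  have smul_mem : ∀ (Ψ : Fin K → Matrix (Fin p) (Fin p) ℝ) (c : ℝ) {r : ℝ},
      r ∈ rconSet q K p Ψ → |c| * r ∈ rconSet q K p (fun k => c • Ψ k) := by
    rintro Ψ c r ⟨V, hV, rfl⟩
    refine ⟨fun k => c • V k, fun k => ?_, ?_⟩
    · rw [Matrix.transpose_smul, ← smul_add, ← hV k]
    · rw [Finset.mul_sum]
      refine Finset.sum_congr rfl fun j _ => ?_
      rw [← lqNorm_smul q hq]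
      congr 1
  -- rcon of zero tuple
  have h0 : rcon q K p (fun _ => (0 : Matrix (Fin p) (Fin p) ℝ)) = 0 := by
    have hmem : (0 : ℝ) ∈ rconSet q K p (fun _ => 0) := by
      refine ⟨fun _ => 0, fun k => by simp, ?_⟩
      symm
      refine Finset.sum_eq_zero fun j _ => ?_
      have heq : (fun ki : Fin K × Fin p =>
          (fun _ : Fin K => (0 : Matrix (Fin p) (Fin p) ℝ)) ki.1 ki.2 j)
          = (0 : (Fin K × Fin p) → ℝ) := by funext ki; simp
      rw [heq]
      exact lqNorm_zero (ι := Fin K × Fin p) q hq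
    exact le_antisymm (rcon_le q _ hmem) (rcon_nonneg q _)
  -- entry bound: every element of the set dominates |Θ k i j| / 2
  have entry_bound : ∀ (Ψ : Fin K → Matrix (Fin p) (Fin p) ℝ) {r : ℝ},
      r ∈ rconSet q K p Ψ → ∀ k i j, |Ψ k i j| ≤ 2 * r := by
    rintro Ψ r ⟨V, hV, rfl⟩ k i j
    have hij : Ψ k i j = V k i j + V k j i := by rw [hV k]; simp [Matrix.add_apply]
    have h1 : |V k i j| ≤ lqNorm q (fun ki : Fin K × Fin p => V ki.1 ki.2 j) :=
      abs_le_lqNorm q hq (fun ki : Fin K × Fin p => V ki.1 ki.2 j) (k, i)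
    have h2 : |V k j i| ≤ lqNorm q (fun ki : Fin K × Fin p => V ki.1 ki.2 i) :=
      abs_le_lqNorm q hq (fun ki : Fin K × Fin p => V ki.1 ki.2 i) (k, j)
    have hle : ∀ j' : Fin p,
        lqNorm q (fun ki : Fin K × Fin p => V ki.1 ki.2 j')
          ≤ ∑ j'' : Fin p, lqNorm q (fun ki : Fin K × Fin p => V ki.1 ki.2 j'') :=
      fun j' => Finset.single_le_sum
        (f := fun j'' => lqNorm q (fun ki : Fin K × Fin p => V ki.1 ki.2 j''))
        (fun _ _ => lqNorm_nonneg q _) (Finset.mem_univ j')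
    calc |Ψ k i j| ≤ |V k i j| + |V k j i| := by rw [hij]; exact abs_add_le _ _
      _ ≤ _ + _ := add_le_add ((h1.trans (hle j))) ((h2.trans (hle i)))
      _ = 2 * _ := by ring
  refine ⟨rcon_nonneg q Θ, ?_, ?_, ?_⟩
  · -- definiteness
    constructor
    · intro hzero k
      ext i j
      rw [Matrix.zero_apply]
      by_contra hne
      have hpos : 0 < |Θ k i j| := abs_pos.mpr hne
      have : |Θ k i j| / 2 ≤ rcon q K p Θ := by
        apply le_csInf (rconSet_nonempty q Θ hΘ)
        intro r hr
        have := entry_bound Θ hr k i j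
        linarith
      rw [hzero] at this
      linarith
    · intro h
      have : Θ = fun _ => 0 := funext h
      rw [this, h0]
  · -- homogeneity
    intro c
    rcases eq_or_ne c 0 with rfl | hc
    · simp only [zero_smul, abs_zero, zero_mul, h0]
    have key : ∀ (Ψ : Fin K → Matrix (Fin p) (Fin p) ℝ) (c : ℝ),
        (∀ k, (Ψ k).IsSymm) →
        rcon q K p (fun k => c • Ψ k) ≤ |c| * rcon q K p Ψ := by
      intro Ψ c hsym
      have heq : |c| * rcon q K p Ψ = sInf ((|c|) • rconSet q K p Ψ) := by
        rw [Real.sInf_smul_of_nonneg (abs_nonneg c)]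
        rfl
      rw [heq]
      apply le_csInf ((rconSet_nonempty q Ψ hsym).smul_set)
      rintro b ⟨r, hr, rfl⟩
      simpa [smul_eq_mul] using rcon_le q _ (smul_mem Ψ c hr)
    have h1 := key Θ c hΘ
    have h2 := key (fun k => c • Θ k) c⁻¹
      (fun k => by rw [Matrix.IsSymm, Matrix.transpose_smul, (hΘ k).eq])
    have hΘ' : (fun k => c⁻¹ • c • Θ k) = Θ := by
      funext k; rw [inv_smul_smul₀ hc]
    rw [hΘ', abs_inv] at h2
    have h2' : |c| * rcon q K p Θ ≤ rcon q K p (fun k => c • Θ k) := by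
      have h3 := mul_le_mul_of_nonneg_left h2 (abs_nonneg c)
      rwa [← mul_assoc, mul_inv_cancel₀ (abs_ne_zero.mpr hc), one_mul] at h3
    linarith
  · -- triangle inequality
    have step : ∀ a ∈ rconSet q K p Θ, ∀ b ∈ rconSet q K p Φ,
        rcon q K p (fun k => Θ k + Φ k) ≤ a + b := by
      rintro a ⟨V, hV, rfl⟩ b ⟨W, hW, rfl⟩
      have hmem : (∑ j : Fin p,
          lqNorm q (fun ki : Fin K × Fin p => (V ki.1 + W ki.1) ki.2 j))
          ∈ rconSet q K p (fun k => Θ k + Φ k) := by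
        refine ⟨fun k => V k + W k, fun k => ?_, rfl⟩
        show Θ k + Φ k = (V k + W k) + (V k + W k)ᵀ
        rw [hV k, hW k, Matrix.transpose_add]
        abel
      refine (rcon_le q _ hmem).trans ?_
      rw [← Finset.sum_add_distrib]
      refine Finset.sum_le_sum fun j _ => ?_
      have : (fun ki : Fin K × Fin p => (V ki.1 + W ki.1) ki.2 j)
          = (fun ki : Fin K × Fin p => V ki.1 ki.2 j)
            + (fun ki : Fin K × Fin p => W ki.1 ki.2 j) := by
        funext ki; simp [Matrix.add_apply]
      rw [this]
      exact lqNorm_add_le q hq _ _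
    have step2 : ∀ a ∈ rconSet q K p Θ,
        rcon q K p (fun k => Θ k + Φ k) - a ≤ rcon q K p Φ := by
      intro a ha
      apply le_csInf (rconSet_nonempty q Φ hΦ)
      intro b hb
      linarith [step a ha b hb]
    have step3 : rcon q K p (fun k => Θ k + Φ k) - rcon q K p Φ ≤ rcon q K p Θ := by
      apply le_csInf (rconSet_nonempty q Θ hΘ)
      intro a ha
      linarith [step2 a ha]
    linarith
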